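/- arXiv:1006.3928 — 3 statements merged into one kernel-verified Lean document; each statement's English description precedes it below -/
import Mathlib

section
/- With the setup of the previous two identities (Λ skew-symmetric m×m, Λ(−B̃) = [Iₙ;0], B = Rᵀ − R the principal part of B̃, Ĩ = [Iₙ;0], R̃ with principal part R, ⟨e,f⟩ = eᵀ(Iₙ−R)f), for all m, l, e, f ∈ ℤⁿ one has Λ(B̃e − (Ĩ−R̃)m, B̃f − (Ĩ−R̃)l) = Λ((Ĩ−R̃)m, (Ĩ−R̃)l) + ⟨e,f⟩ − ⟨f,e⟩ − ⟨e,l⟩ + ⟨f,m⟩. -/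
open Matrix

/-- Corollary 3.2:
`Λ(B̃e − (Ĩ−R̃)m, B̃f − (Ĩ−R̃)l) = Λ((Ĩ−R̃)m, (Ĩ−R̃)l) + ⟨e,f⟩ − ⟨f,e⟩ − ⟨e,l⟩ + ⟨f,m⟩`. -/
theorem stmt3 (m n : ℕ) (hmn : n ≤ m)
    (Λ : Matrix (Fin m) (Fin m) ℤ) (hskew : Λᵀ = -Λ)
    (Bt : Matrix (Fin m) (Fin n) ℤ)
    (It : Matrix (Fin m) (Fin n) ℤ)
    (hIt : It = Matrix.of (fun (i : Fin m) (j : Fin n) =>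
      if (i : ℕ) = (j : ℕ) then (1 : ℤ) else 0))
    (hcomp : Λ * (-Bt) = It)
    (Rt : Matrix (Fin m) (Fin n) ℤ) (R : Matrix (Fin n) (Fin n) ℤ)
    (hR : ∀ (i j : Fin n), Rt (Fin.castLE hmn i) j = R i j)
    (B : Matrix (Fin n) (Fin n) ℤ)
    (hB : ∀ (i j : Fin n), Bt (Fin.castLE hmn i) j = B i j)
    (hBR : B = Rᵀ - R)
    (mm l e f : Fin n → ℤ) :
    (Bt.mulVec e - (It - Rt).mulVec mm) ⬝ᵥ (Λ.mulVec (Bt.mulVec f - (It - Rt).mulVec l)) =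
      ((It - Rt).mulVec mm) ⬝ᵥ (Λ.mulVec ((It - Rt).mulVec l))
        + e ⬝ᵥ ((1 - R).mulVec f) - f ⬝ᵥ ((1 - R).mulVec e)
        - e ⬝ᵥ ((1 - R).mulVec l) + f ⬝ᵥ ((1 - R).mulVec mm) := by
  -- Bᵗᵀ * Λ = Itᵀ
  have h1 : Btᵀ * Λ = Itᵀ := by
    have h := congrArg Matrix.transpose hcomp
    rw [Matrix.transpose_mul, Matrix.transpose_neg, hskew] at h
    simpa [Matrix.neg_mul, Matrix.mul_neg] using h
  -- top-part extraction
  have htop : ∀ v : Fin m → ℤ, (Itᵀ).mulVec v = fun j => v (Fin.castLE hmn j) := by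
    intro v
    funext j
    have hiff : ∀ i : Fin m, (((i : ℕ) = (j : ℕ)) ↔ i = Fin.castLE hmn j) := by
      intro i; constructor
      · intro h; exact Fin.ext h
      · intro h; subst h; rfl
    simp only [Matrix.mulVec, dotProduct, Matrix.transpose_apply, hIt,
      Matrix.of_apply, hiff, ite_mul, one_mul, zero_mul]
    simp
  -- key lemma
  have hkey : ∀ (x : Fin n → ℤ) (v : Fin m → ℤ),
      Bt.mulVec x ⬝ᵥ Λ.mulVec v = x ⬝ᵥ (fun j => v (Fin.castLE hmn j)) := by
    intro x v
    have : x ⬝ᵥ ((Btᵀ * Λ).mulVec v) = Bt.mulVec x ⬝ᵥ Λ.mulVec v := by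
      rw [← Matrix.mulVec_mulVec, dotProduct_mulVec, ← Matrix.mulVec_transpose,
        Matrix.transpose_transpose]
    rw [← this, h1, htop]
  -- skew swap
  have hswap : ∀ u v : Fin m → ℤ, u ⬝ᵥ Λ.mulVec v = -(v ⬝ᵥ Λ.mulVec u) := by
    intro u v
    rw [dotProduct_mulVec, ← Matrix.mulVec_transpose, hskew, Matrix.neg_mulVec,
      neg_dotProduct, dotProduct_comm]
  -- top parts of Bt and It - Rt
  have hBtop : ∀ (x : Fin n → ℤ), (fun j => Bt.mulVec x (Fin.castLE hmn j)) = B.mulVec x := by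
    intro x; funext j; simp [Matrix.mulVec, dotProduct, hB]
  have hXtop : ∀ (x : Fin n → ℤ),
      (fun j => (It - Rt).mulVec x (Fin.castLE hmn j)) = (1 - R).mulVec x := by
    intro x; funext j
    simp only [Matrix.mulVec, dotProduct, Matrix.sub_apply, hIt, Matrix.of_apply, hR,
      Matrix.one_apply]
    congr 1; funext k
    congr 2
    simp [Fin.ext_iff]
  -- transpose trick for ⟨f,e⟩
  have hdual : ∀ (x y : Fin n → ℤ) (M : Matrix (Fin n) (Fin n) ℤ),
      x ⬝ᵥ M.mulVec y = y ⬝ᵥ Mᵀ.mulVec x := by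
    intro x y M
    rw [dotProduct_mulVec, ← Matrix.mulVec_transpose, dotProduct_comm]
  have hBf : e ⬝ᵥ B.mulVec f = e ⬝ᵥ ((1 - R).mulVec f) - f ⬝ᵥ ((1 - R).mulVec e) := by
    rw [hBR, hdual f e (1 - R), Matrix.transpose_sub, Matrix.transpose_one]
    simp only [Matrix.sub_mulVec, dotProduct_sub]
    ring
  have T1 : Bt.mulVec e ⬝ᵥ Λ.mulVec (Bt.mulVec f) = e ⬝ᵥ B.mulVec f := by
    rw [hkey, hBtop]
  have T2 : Bt.mulVec e ⬝ᵥ Λ.mulVec ((It - Rt).mulVec l) = e ⬝ᵥ (1 - R).mulVec l := by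
    rw [hkey, hXtop]
  have T3 : (It - Rt).mulVec mm ⬝ᵥ Λ.mulVec (Bt.mulVec f) = -(f ⬝ᵥ (1 - R).mulVec mm) := by
    rw [hswap, hkey, hXtop]
  rw [Matrix.mulVec_sub, sub_dotProduct, dotProduct_sub, dotProduct_sub,
    T1, T2, T3, hBf]
  ring
end

section
/- In the quantum torus on ℤ⁴ for the Kronecker ice quiver with Λ = [[0,0,1,0],[0,0,0,1],[−1,0,0,−2],[0,−1,2,0]] (relations X^a X^b = q^{Λ(a,b)/2} X^{a+b}), define X_{S₁} = X^{(−1,2,1,0)} + X^{(−1,0,0,0)}, X_{S₂} = X^{(0,−1,0,1)} + X^{(2,−1,0,0)}, and X_δ = X^{(−1,1,1,1)} + X^{(1,−1,0,0)} + X^{(−1,−1,0,1)}. Then X_δ = X_{S₁}·X_{S₂} − q^{−3/2}·X^{(1,0,0,0)}X^{(0,1,0,0)}X^{(0,0,1,0)}. -/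
open Matrix

/-- Lemma 5.1: in the quantum torus on `ℤ⁴` for the Kronecker ice quiver
(with `v = q^{1/2}`, so `q^{-3/2} = v^{-3}`),
`X_δ = X_{S₁} X_{S₂} − q^{−3/2} X₁ X₂ X₃`. -/
theorem stmt11 (T : Type*) [Ring T] (v : Tˣ)
    (hv : ∀ t : T, (v : T) * t = t * (v : T))
    (X : (Fin 4 → ℤ) → T)
    (Λ : Matrix (Fin 4) (Fin 4) ℤ)
    (hΛ : Λ = !![0, 0, 1, 0; 0, 0, 0, 1; -1, 0, 0, -2; 0, -1, 2, 0])
    (hmul : ∀ a b : Fin 4 → ℤ,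
      X a * X b = ((v ^ (a ⬝ᵥ Λ.mulVec b) : Tˣ) : T) * X (a + b)) :
    X ![-1, 1, 1, 1] + X ![1, -1, 0, 0] + X ![-1, -1, 0, 1] =
      (X ![-1, 2, 1, 0] + X ![-1, 0, 0, 0]) * (X ![0, -1, 0, 1] + X ![2, -1, 0, 0]) -
        ((v ^ (-3 : ℤ) : Tˣ) : T) *
          (X ![1, 0, 0, 0] * X ![0, 1, 0, 0] * X ![0, 0, 1, 0]) := by
  subst hΛ
  have h11 := hmul ![-1, 2, 1, 0] ![0, -1, 0, 1]
  have h12 := hmul ![-1, 2, 1, 0] ![2, -1, 0, 0]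
  have h21 := hmul ![-1, 0, 0, 0] ![0, -1, 0, 1]
  have h22 := hmul ![-1, 0, 0, 0] ![2, -1, 0, 0]
  have e1 := hmul ![1, 0, 0, 0] ![0, 1, 0, 0]
  have e2 := hmul ![1, 1, 0, 0] ![0, 0, 1, 0]
  simp only [Matrix.mulVec, dotProduct, Fin.sum_univ_four, Matrix.cons_val',
    Matrix.cons_val_zero, Matrix.cons_val_one, Matrix.head_cons, Matrix.cons_val_fin_one,
    Matrix.empty_val', Matrix.head_fin_const, Matrix.cons_val_two, Matrix.tail_cons,
    Matrix.cons_val_three, Matrix.head_fin_const, Matrix.cons_val, Matrix.of_apply] at h11 h12 h21 h22 e1 e2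
  norm_num at h11 h12 h21 h22 e1 e2
  rw [mul_add, add_mul, add_mul, h11, h12, h21, h22, e1, e2]
  have key : ((v ^ (-3:ℤ) : Tˣ) : T) * (((v : Tˣ) : T) * X ![1,1,1,0]) =
      (((v ^ 2 : Tˣ)⁻¹ : Tˣ) : T) * X ![1,1,1,0] := by
    rw [← mul_assoc]
    congr 1
    rw [← Units.val_mul]
    congr 1
    group
  rw [key]
  have gen : ∀ A B C D : T, A + B + C = A + C + (D + B) - D := fun A B C D => by abel
  exact gen _ _ _ _
end

section
/- Let A be a finite-dimensional hereditary algebra over a field k, and let M, N be A-modules with dim_k Ext¹(M,N) = 1, N ≇ 0. Let 0 → N → E → M → 0 be a non-split short exact sequence. Then E ≇ M ⊕ N. -/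
open CategoryTheory ModuleCat Module

noncomputable section

/-- `dim_k Extⁿ_A(X,Y)`. -/
def extDim (k : Type) [Field k] (A : Type) [Ring A] [Algebra k A]
    (n : ℕ) (X Y : ModuleCat A) : ℕ :=
  finrank k (((Ext k (ModuleCat A) n).obj (Opposite.op X)).obj Y)

/-- Auxiliary (Miyata-style) lemma: over a finite-dimensional algebra, a short exact
sequence whose middle term is isomorphic to the direct sum of the ends must split. -/
theorem stmt15' (k : Type) [Field k] (A : Type) [Ring A] [Algebra k A]
    [FiniteDimensional k A]
    (M N E : ModuleCat A)
    [FiniteDimensional k M] [FiniteDimensional k N] [FiniteDimensional k E]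
    (i : N ⟶ E) (p : E ⟶ M)
    (hi : Function.Injective i) (hp : Function.Surjective p)
    (hex : LinearMap.range i.hom = LinearMap.ker p.hom)
    (hnonsplit : ¬ ∃ s : M ⟶ E, s ≫ p = 𝟙 M) :
    ¬ Nonempty (↥E ≃ₗ[A] (↥M × ↥N)) := by
  rintro ⟨φ⟩
  apply hnonsplit
  -- finite-dimensionality of Hom spaces over k
  have fd : ∀ (X Y : ModuleCat A) [FiniteDimensional k X] [FiniteDimensional k Y],
      FiniteDimensional k (↥X →ₗ[A] ↥Y) := by
    intro X Y _ _
    exact FiniteDimensional.of_injective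
      (LinearMap.restrictScalarsₗ k A ↥X ↥Y k)
      (LinearMap.restrictScalars_injective k)
  haveI := fd M M; haveI := fd M N; haveI := fd M E
  -- composition with p
  let Φ : (↥M →ₗ[A] ↥E) →ₗ[k] (↥M →ₗ[A] ↥M) :=
    { toFun := fun f => p.hom.comp f
      map_add' := fun f g => LinearMap.ext fun x => map_add p.hom _ _
      map_smul' := fun c f => LinearMap.ext fun x => by
        simpa using LinearMap.map_smul_of_tower p.hom c (f x) }
  -- composition with i
  let Ψ : (↥M →ₗ[A] ↥N) →ₗ[k] (↥M →ₗ[A] ↥E) :=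
    { toFun := fun g => i.hom.comp g
      map_add' := fun f g => LinearMap.ext fun x => map_add i.hom _ _
      map_smul' := fun c f => LinearMap.ext fun x => by
        simpa using LinearMap.map_smul_of_tower i.hom c (f x) }
  have hΨinj : Function.Injective Ψ := by
    intro f g h
    ext x
    exact hi (LinearMap.congr_fun h x)
  have hker : LinearMap.ker Φ = LinearMap.range Ψ := by
    ext f
    constructor
    · intro hf
      have hf' : ∀ x, f x ∈ LinearMap.range i.hom := by
        intro x
        rw [hex]
        exact LinearMap.congr_fun (hf : p.hom.comp f = 0) x
      let i' : ↥N ≃ₗ[A] LinearMap.range i.hom := LinearEquiv.ofInjective _ hi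
      refine ⟨i'.symm.toLinearMap.comp (f.codRestrict _ hf'), ?_⟩
      show i.hom.comp _ = f
      ext x
      show i (i'.symm ⟨f x, hf' x⟩) = f x
      rw [← LinearEquiv.ofInjective_apply i.hom (h := hi), LinearEquiv.apply_symm_apply]
    · rintro ⟨g, rfl⟩
      show p.hom.comp (i.hom.comp g) = 0
      ext x
      have : i (g x) ∈ LinearMap.ker p.hom := by
        rw [← hex]; exact ⟨g x, rfl⟩
      simpa using this
  -- dimension count
  let Θ : (↥M →ₗ[A] ↥E) ≃ₗ[k] (↥M →ₗ[A] (↥M × ↥N)) :=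
    { toFun := fun f => φ.toLinearMap.comp f
      invFun := fun f => φ.symm.toLinearMap.comp f
      map_add' := fun f g => LinearMap.ext fun x => map_add φ _ _
      map_smul' := fun c f => LinearMap.ext fun x => by
        simp only [LinearMap.coe_comp, Function.comp_apply, LinearMap.smul_apply,
          RingHom.id_apply]
        exact φ.toLinearMap.map_smul_of_tower c (f x)
      left_inv := fun f => LinearMap.ext fun x => φ.symm_apply_apply _
      right_inv := fun f => LinearMap.ext fun x => φ.apply_symm_apply _ }
  have hdim : finrank k (↥M →ₗ[A] ↥E)
      = finrank k (↥M →ₗ[A] ↥M) + finrank k (↥M →ₗ[A] ↥N) := by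
    rw [Θ.finrank_eq, ← (LinearMap.prodEquiv k (M := ↥M) (M₂ := ↥M) (M₃ := ↥N)).finrank_eq]
    exact Module.finrank_prod
  have hrn := LinearMap.finrank_range_add_finrank_ker Φ
  have hkerdim : finrank k (LinearMap.ker Φ) = finrank k (↥M →ₗ[A] ↥N) := by
    rw [hker, LinearMap.finrank_range_of_inj hΨinj]
  have hrange : finrank k (LinearMap.range Φ) = finrank k (↥M →ₗ[A] ↥M) := by omega
  have htop : LinearMap.range Φ = ⊤ :=
    Submodule.eq_top_of_finrank_eq hrange
  have hmem : (LinearMap.id : ↥M →ₗ[A] ↥M) ∈ LinearMap.range Φ := htop ▸ Submodule.mem_top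
  obtain ⟨s, hs⟩ := hmem
  exact ⟨ModuleCat.ofHom s, ModuleCat.hom_ext hs⟩

/-- Over a finite-dimensional hereditary `k`-algebra `A` (e.g. the path
algebra of an acyclic quiver), if `M`, `N` are indecomposable rigid modules with
`dim_k Ext¹(M,N) = 1` and `N ≇ 0`, then the middle term `E` of any non-split short
exact sequence `0 → N → E → M → 0` is not isomorphic to `M ⊕ N`. -/
theorem stmt15 (k : Type) [Field k] (A : Type) [Ring A] [Algebra k A]
    [FiniteDimensional k A]
    (hher : ∀ X Y : ModuleCat A,
      Subsingleton (((Ext k (ModuleCat A) 2).obj (Opposite.op X)).obj Y))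
    (M N E : ModuleCat A)
    [FiniteDimensional k M] [FiniteDimensional k N] [FiniteDimensional k E]
    (hN : Nontrivial N)
    (hindM : ∀ e : M ⟶ M, e ≫ e = e → e = 0 ∨ e = 𝟙 M)
    (hindN : ∀ e : N ⟶ N, e ≫ e = e → e = 0 ∨ e = 𝟙 N)
    (hrigM : extDim k A 1 M M = 0)
    (hrigN : extDim k A 1 N N = 0)
    (hext1 : extDim k A 1 M N = 1)
    (i : N ⟶ E) (p : E ⟶ M)
    (hi : Function.Injective i) (hp : Function.Surjective p)
    (hex : LinearMap.range i.hom = LinearMap.ker p.hom)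
    (hnonsplit : ¬ ∃ s : M ⟶ E, s ≫ p = 𝟙 M) :
    ¬ Nonempty (↥E ≃ₗ[A] (↥M × ↥N)) :=
  stmt15' k A M N E i p hi hp hex hnonsplit

end
end
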